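/- Let 0 < α ≤ 1, let s be a positive integer with s ≤ n, and let k > 0 be such that ks is a positive integer and a(s,ks;α) = (√(ks) − α)/(√s + α) > 1. Let x ∈ ℝⁿ be s-sparse and b = Ax. Suppose A ∈ ℝ^{m×n} has (ℓ₂,ℓ₁)-RIP constants of orders ks and (k+1)s satisfying δ_{ks}^{ub} + a(s,ks;α)·δ_{(k+1)s}^{lb} < a(s,ks;α) − 1. Then any x̂ ∈ ℝⁿ with A x̂ = b and ‖x̂‖₁ − α‖x̂‖₂ ≤ ‖x‖₁ − α‖x‖₂ must equal x; that is, x is the unique minimizer of ‖·‖₁ − α‖·‖₂ subject to Az = b. -/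

import Mathlib

open Finset

/-- The ℓ₁ norm of a vector in `ℝⁿ`. -/
noncomputable def l1norm {n : ℕ} (x : Fin n → ℝ) : ℝ := ∑ i, |x i|

/-- The ℓ₂ norm of a vector in `ℝⁿ`. -/
noncomputable def l2norm {n : ℕ} (x : Fin n → ℝ) : ℝ := Real.sqrt (∑ i, (x i) ^ 2)

/-- The restriction `x_S` of a vector `x` to an index set `S` (equal to `x` on `S`, zero
outside `S`). -/
def restr {n : ℕ} (x : Fin n → ℝ) (S : Finset (Fin n)) : Fin n → ℝ :=
  fun i => if i ∈ S then x i else 0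

/-- `T` is an index set of the `s` largest-magnitude entries of `x` among the indices in `S`. -/
def IsMaxIdxOn {n : ℕ} (x : Fin n → ℝ) (s : ℕ) (T S : Finset (Fin n)) : Prop :=
  T ⊆ S ∧ T.card = s ∧ ∀ i ∈ T, ∀ j ∈ S \ T, |x j| ≤ |x i|

/-- `T` is an index set of the `s` largest-magnitude entries of `x`. -/
def IsMaxIdx {n : ℕ} (x : Fin n → ℝ) (s : ℕ) (T : Finset (Fin n)) : Prop :=
  IsMaxIdxOn x s T Finset.univ

/-- A vector is `r`-sparse: it has at most `r` nonzero entries. -/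
def Sparse {n : ℕ} (r : ℕ) (v : Fin n → ℝ) : Prop :=
  ∃ S : Finset (Fin n), S.card ≤ r ∧ ∀ i ∉ S, v i = 0

/- ### Auxiliary lemmas -/

lemma l2norm_eq_norm {n : ℕ} (x : Fin n → ℝ) :
    l2norm x = ‖(WithLp.equiv 2 (Fin n → ℝ)).symm x‖ := by
  rw [EuclideanSpace.norm_eq, l2norm]
  congr 1; apply Finset.sum_congr rfl; intro i _
  show x i ^ 2 = ‖x i‖ ^ 2; rw [Real.norm_eq_abs, sq_abs]

lemma l2norm_add_le {n : ℕ} (x y : Fin n → ℝ) : l2norm (x + y) ≤ l2norm x + l2norm y := by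
  simp only [l2norm_eq_norm]
  have h : (WithLp.equiv 2 (Fin n → ℝ)).symm (x + y)
      = (WithLp.equiv 2 (Fin n → ℝ)).symm x + (WithLp.equiv 2 (Fin n → ℝ)).symm y := rfl
  rw [h]; exact norm_add_le _ _

lemma l2norm_eq_zero' {n : ℕ} {x : Fin n → ℝ} (h : l2norm x = 0) : x = 0 := by
  rw [l2norm_eq_norm, norm_eq_zero] at h
  funext i
  exact congrFun (congrArg (WithLp.equiv 2 (Fin n → ℝ)) h) i

lemma l1norm_neg {n : ℕ} (x : Fin n → ℝ) : l1norm (-x) = l1norm x := by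
  simp [l1norm]

lemma l1norm_restr {n : ℕ} (x : Fin n → ℝ) (S : Finset (Fin n)) :
    l1norm (restr x S) = ∑ i ∈ S, |x i| := by
  rw [l1norm, ← Finset.sum_subset (Finset.subset_univ S)]
  · exact Finset.sum_congr rfl fun i hi => by simp [restr, hi]
  · intro i _ hi; simp [restr, hi]

lemma sum_sq_of_supp {n : ℕ} (w : Fin n → ℝ) (U : Finset (Fin n)) (hsupp : ∀ i ∉ U, w i = 0) :
    ∑ i, (w i) ^ 2 = ∑ i ∈ U, (w i) ^ 2 := by
  rw [← Finset.sum_subset (Finset.subset_univ U)]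
  intro i _ hi; rw [hsupp i hi]; ring

lemma l1norm_of_supp {n : ℕ} (w : Fin n → ℝ) (U : Finset (Fin n)) (hsupp : ∀ i ∉ U, w i = 0) :
    l1norm w = ∑ i ∈ U, |w i| := by
  rw [l1norm, ← Finset.sum_subset (Finset.subset_univ U)]
  intro i _ hi; rw [hsupp i hi]; simp

lemma l2norm_restr {n : ℕ} (x : Fin n → ℝ) (S : Finset (Fin n)) :
    l2norm (restr x S) = Real.sqrt (∑ i ∈ S, (x i) ^ 2) := by
  rw [l2norm, sum_sq_of_supp (restr x S) S (fun i hi => by simp [restr, hi])]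
  congr 1
  exact Finset.sum_congr rfl fun i hi => by simp [restr, hi]

lemma sum_abs_le_sqrt_card_mul {n : ℕ} (x : Fin n → ℝ) (S : Finset (Fin n)) :
    ∑ i ∈ S, |x i| ≤ Real.sqrt S.card * Real.sqrt (∑ i ∈ S, (x i) ^ 2) := by
  have h := Finset.sum_mul_sq_le_sq_mul_sq S (fun _ => (1:ℝ)) (fun i => |x i|)
  simp only [one_mul, one_pow, Finset.sum_const, nsmul_eq_mul, mul_one, sq_abs] at h
  have h1 : (0:ℝ) ≤ ∑ i ∈ S, |x i| := Finset.sum_nonneg fun i _ => abs_nonneg _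
  calc ∑ i ∈ S, |x i| = Real.sqrt ((∑ i ∈ S, |x i|) ^ 2) := by rw [Real.sqrt_sq h1]
    _ ≤ Real.sqrt ((S.card : ℝ) * ∑ i ∈ S, (x i) ^ 2) := Real.sqrt_le_sqrt h
    _ = Real.sqrt S.card * Real.sqrt (∑ i ∈ S, (x i) ^ 2) := Real.sqrt_mul (by positivity) _

lemma exists_top_aux {n : ℕ} (f : Fin n → ℝ) :
    ∀ (c : ℕ) (U : Finset (Fin n)), U.card = c → ∀ r ≤ c,
      ∃ T, T ⊆ U ∧ T.card = r ∧ ∀ i ∈ T, ∀ j ∈ U \ T, f j ≤ f i := by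
  intro c
  induction c with
  | zero => intro U hU r hr
            refine ⟨∅, Finset.empty_subset _, by simp; omega, ?_⟩
            intro i hi; simp at hi
  | succ c ih =>
    intro U hU r hr
    rcases eq_or_lt_of_le hr with heq | hlt
    · exact ⟨U, Finset.Subset.refl _, by omega, fun i _ j hj => by simp at hj⟩
    · have hne : U.Nonempty := Finset.card_pos.mp (by omega)
      obtain ⟨j0, hj0U, hj0m⟩ := Finset.exists_min_image U f hne
      obtain ⟨T, hTsub, hTcard, hTtop⟩ := ih (U.erase j0)
        (by rw [Finset.card_erase_of_mem hj0U, hU]; omega) r (by omega)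
      refine ⟨T, hTsub.trans (Finset.erase_subset _ _), hTcard, ?_⟩
      intro i hi j hj
      rw [Finset.mem_sdiff] at hj
      by_cases hjj : j = j0
      · subst hjj
        exact hj0m i (Finset.mem_of_mem_erase (hTsub hi))
      · exact hTtop i hi j (Finset.mem_sdiff.mpr ⟨Finset.mem_erase.mpr ⟨hjj, hj.1⟩, hj.2⟩)

lemma exists_top {n : ℕ} (f : Fin n → ℝ) (U : Finset (Fin n)) (r : ℕ) (h : r ≤ U.card) :
    ∃ T, T ⊆ U ∧ T.card = r ∧ ∀ i ∈ T, ∀ j ∈ U \ T, f j ≤ f i :=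
  exists_top_aux f U.card U rfl r h

section LemL
variable {n m : ℕ} (A : Matrix (Fin m) (Fin n) ℝ) (ks : ℕ) (δub : ℝ)

lemma lemL_base (hks : 0 < ks) (hδub : 0 ≤ δub)
    (hRIPub : ∀ v : Fin n → ℝ, Sparse ks v → l1norm (A.mulVec v) ≤ (1 + δub) * l2norm v)
    (w : Fin n → ℝ) (U : Finset (Fin n)) (θ : ℝ) (hθ : 0 ≤ θ)
    (hcard : U.card ≤ ks) (hsupp : ∀ i ∉ U, w i = 0) (hbd : ∀ i, |w i| ≤ θ) :
    l1norm (A.mulVec w) ≤ (1 + δub) * (Real.sqrt ks * θ) := by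
  have h1 : l1norm (A.mulVec w) ≤ (1 + δub) * l2norm w := hRIPub w ⟨U, hcard, hsupp⟩
  have h2 : l2norm w ≤ Real.sqrt ks * θ := by
    rw [l2norm, sum_sq_of_supp w U hsupp]
    have h3 : ∑ i ∈ U, (w i) ^ 2 ≤ (ks : ℝ) * θ ^ 2 := by
      calc ∑ i ∈ U, (w i) ^ 2 ≤ ∑ _i ∈ U, θ ^ 2 := by
            refine Finset.sum_le_sum fun i _ => ?_
            rw [← sq_abs]; exact pow_le_pow_left₀ (abs_nonneg _) (hbd i) 2
        _ = (U.card : ℝ) * θ ^ 2 := by rw [Finset.sum_const, nsmul_eq_mul]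
        _ ≤ (ks : ℝ) * θ ^ 2 := by
            apply mul_le_mul_of_nonneg_right _ (sq_nonneg θ)
            exact_mod_cast hcard
    calc Real.sqrt (∑ i ∈ U, (w i) ^ 2) ≤ Real.sqrt ((ks : ℝ) * θ ^ 2) := Real.sqrt_le_sqrt h3
      _ = Real.sqrt ks * θ := by rw [Real.sqrt_mul (Nat.cast_nonneg ks), Real.sqrt_sq hθ]
  calc l1norm (A.mulVec w) ≤ (1 + δub) * l2norm w := h1
    _ ≤ (1 + δub) * (Real.sqrt ks * θ) := by
        apply mul_le_mul_of_nonneg_left h2 (by linarith)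

lemma lemL (hks : 0 < ks) (hδub : 0 ≤ δub)
    (hRIPub : ∀ v : Fin n → ℝ, Sparse ks v → l1norm (A.mulVec v) ≤ (1 + δub) * l2norm v) :
    ∀ (c : ℕ) (w : Fin n → ℝ) (U : Finset (Fin n)) (θ : ℝ), 0 ≤ θ → U.card ≤ c →
      (∀ i ∉ U, w i = 0) → (∀ i, |w i| ≤ θ) →
      l1norm (A.mulVec w) ≤ (1 + δub) * (Real.sqrt ks * θ + l1norm w / Real.sqrt ks) := by
  have sqks_pos : 0 < Real.sqrt ks := Real.sqrt_pos.mpr (by exact_mod_cast hks)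
  have sqks_sq : Real.sqrt ks * Real.sqrt ks = (ks : ℝ) :=
    Real.mul_self_sqrt (Nat.cast_nonneg ks)
  intro c
  induction c with
  | zero =>
    intro w U θ hθ hcard hsupp hbd
    have h := lemL_base A ks δub hks hδub hRIPub w U θ hθ (by omega) hsupp hbd
    have h0 : 0 ≤ (1 + δub) * (l1norm w / Real.sqrt ks) := by
      apply mul_nonneg (by linarith)
      apply div_nonneg (Finset.sum_nonneg fun i _ => abs_nonneg _) sqks_pos.le
    nlinarith [h]
  | succ c ih =>
    intro w U θ hθ hcard hsupp hbd
    by_cases hUks : U.card ≤ ks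
    · have h := lemL_base A ks δub hks hδub hRIPub w U θ hθ hUks hsupp hbd
      have h0 : 0 ≤ (1 + δub) * (l1norm w / Real.sqrt ks) := by
        apply mul_nonneg (by linarith)
        apply div_nonneg (Finset.sum_nonneg fun i _ => abs_nonneg _) sqks_pos.le
      nlinarith [h]
    · push_neg at hUks
      obtain ⟨T, hTsub, hTcard, hTtop⟩ := exists_top (fun i => |w i|) U ks hUks.le
      set w1 := restr w T with hw1
      set w2 := restr w (U \ T) with hw2
      have hsplit : w = w1 + w2 := by
        funext i
        by_cases hiT : i ∈ T
        · have h : i ∉ U \ T := fun h => (Finset.mem_sdiff.mp h).2 hiT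
          simp [hw1, hw2, restr, hiT, h]
        · by_cases hiU : i ∈ U
          · simp [hw1, hw2, restr, hiT, Finset.mem_sdiff.mpr ⟨hiU, hiT⟩]
          · simp [hw1, hw2, restr, hiT, fun h => hiU (Finset.mem_sdiff.mp h).1,
              hsupp i hiU]
      set θ' := (∑ i ∈ T, |w i|) / ks with hθ'
      have hθ'0 : 0 ≤ θ' := div_nonneg (Finset.sum_nonneg fun i _ => abs_nonneg _)
        (Nat.cast_nonneg ks)
      have hbd2 : ∀ i, |w2 i| ≤ θ' := by
        intro i
        by_cases hi : i ∈ U \ T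
        · have h : (ks : ℝ) * |w i| ≤ ∑ t ∈ T, |w t| := by
            calc (ks : ℝ) * |w i| = ∑ _t ∈ T, |w i| := by
                  rw [Finset.sum_const, hTcard, nsmul_eq_mul]
              _ ≤ ∑ t ∈ T, |w t| := Finset.sum_le_sum fun t ht => hTtop t ht i hi
          have hw2i : w2 i = w i := by simp [hw2, restr, hi]
          rw [hw2i, hθ', le_div_iff₀ (by exact_mod_cast hks)]
          linarith
        · simp [hw2, restr, hi, hθ'0]
      have hbd1 : ∀ i, |w1 i| ≤ θ := by
        intro i; by_cases hi : i ∈ T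
        · simpa [hw1, restr, hi] using hbd i
        · simp [hw1, restr, hi, hθ]
      have hcard2 : (U \ T).card ≤ c := by
        rw [Finset.card_sdiff_of_subset hTsub, hTcard]; omega
      have hsupp2 : ∀ i ∉ U \ T, w2 i = 0 := by
        intro i hi; simp [hw2, restr, hi]
      have h2 := ih w2 (U \ T) θ' hθ'0 hcard2 hsupp2 hbd2
      have h1 : l1norm (A.mulVec w1) ≤ (1 + δub) * (Real.sqrt ks * θ) :=
        lemL_base A ks δub hks hδub hRIPub w1 T θ hθ hTcard.le
          (fun i hi => by simp [hw1, restr, hi]) hbd1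
      have hAw : A.mulVec w = A.mulVec w1 + A.mulVec w2 := by
        rw [hsplit, Matrix.mulVec_add]
      have htri : l1norm (A.mulVec w) ≤ l1norm (A.mulVec w1) + l1norm (A.mulVec w2) := by
        rw [hAw, l1norm, l1norm, l1norm, ← Finset.sum_add_distrib]
        exact Finset.sum_le_sum fun i _ => abs_add_le _ _
      have hθ'eq : Real.sqrt ks * θ' = (∑ i ∈ T, |w i|) / Real.sqrt ks := by
        rw [hθ']
        field_simp
        linear_combination (∑ i ∈ T, |w i|) * sqks_sq
      have hl1w2 : l1norm w2 = ∑ i ∈ U \ T, |w i| := l1norm_restr w (U \ T)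
      have hl1w : l1norm w = ∑ i ∈ T, |w i| + ∑ i ∈ U \ T, |w i| := by
        rw [l1norm_of_supp w U hsupp, ← Finset.sum_sdiff hTsub]; ring
      calc l1norm (A.mulVec w) ≤ l1norm (A.mulVec w1) + l1norm (A.mulVec w2) := htri
        _ ≤ (1 + δub) * (Real.sqrt ks * θ) +
            (1 + δub) * (Real.sqrt ks * θ' + l1norm w2 / Real.sqrt ks) := by linarith
        _ = (1 + δub) * (Real.sqrt ks * θ + l1norm w / Real.sqrt ks) := by
            rw [hθ'eq, hl1w2, hl1w]; field_simp

end LemL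

set_option maxHeartbeats 1600000 in
/-- exact recovery via `ℓ₁ − αℓ₂` minimization.  Let `0 < α ≤ 1`,
`s ∈ [1, n]`, `k > 0` with `ks ∈ ℤ₊` and `a(s,ks;α) = (√(ks) − α)/(√s + α) > 1`.
If `A` has (ℓ₂,ℓ₁)-RIP constants of orders `ks` and `(k+1)s` satisfying
`δ_{ks}^{ub} + a(s,ks;α)·δ_{(k+1)s}^{lb} < a(s,ks;α) − 1`, `x` is `s`-sparse and `b = Ax`,
then any `x̂` with `Ax̂ = b` and `‖x̂‖₁ − α‖x̂‖₂ ≤ ‖x‖₁ − α‖x‖₂` equals `x`. -/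
theorem stmt5 {n m : ℕ} (α : ℝ) (hα0 : 0 < α) (hα1 : α ≤ 1)
    (s : ℕ) (hs : 0 < s) (hsn : s ≤ n)
    (k : ℝ) (hk : 0 < k) (ks : ℕ) (hks : 0 < ks) (hksk : (ks : ℝ) = k * s)
    (a : ℝ) (ha_def : a = (Real.sqrt (ks : ℝ) - α) / (Real.sqrt s + α)) (ha : 1 < a)
    (A : Matrix (Fin m) (Fin n) ℝ) (δlb δub : ℝ) (hδlb : 0 ≤ δlb) (hδub : 0 ≤ δub)
    (hRIPlb : ∀ v : Fin n → ℝ, Sparse (ks + s) v →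
      (1 - δlb) * l2norm v ≤ l1norm (A.mulVec v))
    (hRIPub : ∀ v : Fin n → ℝ, Sparse ks v →
      l1norm (A.mulVec v) ≤ (1 + δub) * l2norm v)
    (hcond : δub + a * δlb < a - 1)
    (x : Fin n → ℝ) (hx : Sparse s x) (b : Fin m → ℝ) (hb : b = A.mulVec x) :
    ∀ xhat : Fin n → ℝ, A.mulVec xhat = b →
      l1norm xhat - α * l2norm xhat ≤ l1norm x - α * l2norm x → xhat = x := by
  intro xhat hAxhat hmin
  set h := xhat - x with hh
  have hhap : ∀ i, h i = xhat i - x i := fun i => rfl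
  have hAh : A.mulVec h = 0 := by
    rw [hh, Matrix.mulVec_sub, hAxhat, hb, sub_self]
  clear_value h
  have hl1Ah : l1norm (A.mulVec h) = 0 := by rw [hAh]; simp [l1norm]
  -- basic positivity facts
  set sqks := Real.sqrt ks with hsqks
  set sqs := Real.sqrt s with hsqs
  have sqks_pos : 0 < sqks := Real.sqrt_pos.mpr (by exact_mod_cast hks)
  have sqks_sq : sqks * sqks = (ks : ℝ) := Real.mul_self_sqrt (Nat.cast_nonneg ks)
  have sqs_nonneg : 0 ≤ sqs := Real.sqrt_nonneg _
  clear_value sqks sqs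
  have hden : 0 < sqs + α := by linarith
  have hsa : sqks - α = a * (sqs + α) := by
    rw [ha_def]; field_simp
  have hδlb1 : δlb < 1 := by nlinarith
  -- extend the support of x to a set of cardinality exactly s
  obtain ⟨S0, hS0card, hS0zero⟩ := hx
  obtain ⟨S, hS0S, hScard⟩ := Finset.exists_superset_card_eq hS0card
    (by rw [Fintype.card_fin]; exact hsn)
  have hxzero : ∀ i ∉ S, x i = 0 := fun i hi => hS0zero i (fun hmem => hi (hS0S hmem))
  -- the cone condition
  have hl1x : l1norm x = ∑ i ∈ S, |x i| := l1norm_of_supp x S hxzero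
  have e1 : l1norm xhat = ∑ i ∈ S, |xhat i| + ∑ i ∈ Sᶜ, |h i| := by
    rw [l1norm, ← Finset.sum_add_sum_compl S]
    congr 1
    refine Finset.sum_congr rfl fun i hi => ?_
    rw [hhap i, hxzero i (Finset.mem_compl.mp hi), sub_zero]
  have e2 : ∑ i ∈ S, |x i| - ∑ i ∈ S, |h i| ≤ ∑ i ∈ S, |xhat i| := by
    rw [← Finset.sum_sub_distrib]
    refine Finset.sum_le_sum fun i _ => ?_
    have := abs_sub_abs_le_abs_sub (x i) (-(h i))
    rw [abs_neg, sub_neg_eq_add] at this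
    have hxh : x i + h i = xhat i := by rw [hhap i]; ring
    rw [hxh] at this; exact this
  have e4 : l2norm xhat ≤ l2norm x + l2norm h := by
    have hxx : xhat = x + h := by funext i; rw [Pi.add_apply, hhap i]; ring
    rw [hxx]; exact l2norm_add_le x h
  have hcone : ∑ i ∈ Sᶜ, |h i| ≤ ∑ i ∈ S, |h i| + α * l2norm h := by
    have e5 : α * l2norm xhat ≤ α * (l2norm x + l2norm h) :=
      mul_le_mul_of_nonneg_left e4 hα0.le
    rw [e1, hl1x] at hmin
    nlinarith [hmin, e2, e5]
  by_cases hcase : (Sᶜ).card ≤ ks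
  · -- few coordinates outside S : h is (ks+s)-sparse
    have hcompl : (Sᶜ).card = n - s := by
      rw [Finset.card_compl, hScard, Fintype.card_fin]
    have huniv : (Finset.univ : Finset (Fin n)).card ≤ ks + s := by
      rw [Finset.card_univ, Fintype.card_fin]; omega
    have hsp : Sparse (ks + s) h := ⟨Finset.univ, huniv, fun i hi => absurd (Finset.mem_univ i) hi⟩
    have hle := hRIPlb h hsp
    rw [hl1Ah] at hle
    have hl2h : l2norm h = 0 := le_antisymm (by nlinarith [Real.sqrt_nonneg (∑ i, (h i)^2)])
      (Real.sqrt_nonneg _)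
    have := l2norm_eq_zero' hl2h
    rw [hh] at this
    exact sub_eq_zero.mp this
  · push_neg at hcase
    obtain ⟨T1, hT1sub, hT1card, hT1top⟩ := exists_top (fun i => |h i|) Sᶜ ks hcase.le
    set V := S ∪ T1 with hVdef
    set W := Sᶜ \ T1 with hWdef
    have hdisj : Disjoint S T1 := Finset.disjoint_left.mpr
      (fun i hiS hiT1 => (Finset.mem_compl.mp (hT1sub hiT1)) hiS)
    obtain ⟨hV, hhV⟩ : ∃ hV, hV = restr h V := ⟨_, rfl⟩
    obtain ⟨hW, hhW⟩ : ∃ hW, hW = restr h W := ⟨_, rfl⟩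
    have hsplit : h = hV + hW := by
      funext i
      by_cases hiS : i ∈ S
      · have h1 : i ∈ V := Finset.mem_union_left _ hiS
        have h2 : i ∉ W := fun hw => (Finset.mem_compl.mp (Finset.mem_sdiff.mp hw).1) hiS
        simp [hhV, hhW, restr, h1, h2]
      · by_cases hiT : i ∈ T1
        · have h1 : i ∈ V := Finset.mem_union_right _ hiT
          have h2 : i ∉ W := fun hw => (Finset.mem_sdiff.mp hw).2 hiT
          simp [hhV, hhW, restr, h1, h2]
        · have h1 : i ∉ V := fun hv => by
            rcases Finset.mem_union.mp hv with h' | h'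
            exacts [hiS h', hiT h']
          have h2 : i ∈ W := Finset.mem_sdiff.mpr ⟨Finset.mem_compl.mpr hiS, hiT⟩
          simp [hhV, hhW, restr, h1, h2]
    obtain ⟨β, hβ⟩ : ∃ β, β = l2norm hV := ⟨_, rfl⟩
    have hβ0 : 0 ≤ β := by rw [hβ]; exact Real.sqrt_nonneg _
    obtain ⟨L, hL⟩ : ∃ L, L = ∑ i ∈ Sᶜ, |h i| := ⟨_, rfl⟩
    obtain ⟨M, hM⟩ : ∃ M, M = L / sqks := ⟨_, rfl⟩
    have hT1nonneg : 0 ≤ ∑ i ∈ T1, |h i| := Finset.sum_nonneg fun i _ => abs_nonneg _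
    have hWnonneg : 0 ≤ ∑ i ∈ W, |h i| := Finset.sum_nonneg fun i _ => abs_nonneg _
    have hsum : ∑ i ∈ W, |h i| + ∑ i ∈ T1, |h i| = L := by
      rw [hL, hWdef]; exact Finset.sum_sdiff hT1sub
    have hL0 : 0 ≤ L := by rw [← hsum]; positivity
    have hM0 : 0 ≤ M := by rw [hM]; exact div_nonneg hL0 sqks_pos.le
    obtain ⟨θ, hθdef⟩ : ∃ θ, θ = (∑ i ∈ T1, |h i|) / (ks:ℝ) := ⟨_, rfl⟩
    have hθ0 : 0 ≤ θ := by rw [hθdef]; exact div_nonneg hT1nonneg (Nat.cast_nonneg ks)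
    have hbdW : ∀ i, |hW i| ≤ θ := by
      intro i
      by_cases hi : i ∈ W
      · have hb1 : (ks : ℝ) * |h i| ≤ ∑ t ∈ T1, |h t| := by
          calc (ks : ℝ) * |h i| = ∑ _t ∈ T1, |h i| := by
                rw [Finset.sum_const, hT1card, nsmul_eq_mul]
            _ ≤ ∑ t ∈ T1, |h t| := Finset.sum_le_sum fun t ht => hT1top t ht i hi
        have hWi : hW i = h i := by simp [hhW, restr, hi]
        rw [hWi, hθdef, le_div_iff₀ (by exact_mod_cast hks)]
        linarith
      · simp [hhW, restr, hi, hθ0]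
    have hWsupp : ∀ i ∉ W, hW i = 0 := fun i hi => by simp [hhW, restr, hi]
    have hAW := lemL A ks δub hks hδub hRIPub W.card hW W θ hθ0 le_rfl hWsupp hbdW
    have hl1hW : l1norm hW = ∑ i ∈ W, |h i| := by rw [hhW]; exact l1norm_restr h W
    have key : ∀ X : ℝ, sqks * (X / ks) = X / sqks := by
      intro X
      rw [eq_div_iff sqks_pos.ne']
      field_simp
      linear_combination X * sqks_sq
    have hcomb : sqks * θ + l1norm hW / sqks = M := by
      rw [hl1hW, hθdef, key, ← add_div, hM, ← hsum, add_comm]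
    rw [← hsqks] at hAW
    rw [hcomb] at hAW
    -- lower RIP bound on hV
    have hAV : A.mulVec hV = -(A.mulVec hW) := by
      have : A.mulVec hV + A.mulVec hW = 0 := by
        rw [← Matrix.mulVec_add, ← hsplit, hAh]
      exact eq_neg_of_add_eq_zero_left this
    have hVcard : V.card = s + ks := by
      rw [hVdef, Finset.card_union_of_disjoint hdisj, hScard, hT1card]
    have hVsp : Sparse (ks + s) hV :=
      ⟨V, by omega, fun i hi => by simp [hhV, restr, hi]⟩
    have hlow : (1 - δlb) * β ≤ (1 + δub) * M := by
      calc (1 - δlb) * β = (1 - δlb) * l2norm hV := by rw [hβ]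
        _ ≤ l1norm (A.mulVec hV) := hRIPlb hV hVsp
        _ = l1norm (A.mulVec hW) := by rw [hAV, l1norm_neg]
        _ ≤ (1 + δub) * M := hAW
    -- bound the S part by β
    have hβeq : β = Real.sqrt (∑ i ∈ V, (h i) ^ 2) := by rw [hβ, hhV]; exact l2norm_restr h V
    have hS1 : ∑ i ∈ S, |h i| ≤ sqs * β := by
      have c1 := sum_abs_le_sqrt_card_mul h S
      rw [hScard, ← hsqs] at c1
      have c2 : Real.sqrt (∑ i ∈ S, (h i) ^ 2) ≤ β := by
        rw [hβeq]
        apply Real.sqrt_le_sqrt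
        exact Finset.sum_le_sum_of_subset_of_nonneg Finset.subset_union_left
          (fun i _ _ => sq_nonneg _)
      calc ∑ i ∈ S, |h i| ≤ sqs * Real.sqrt (∑ i ∈ S, (h i) ^ 2) := c1
        _ ≤ sqs * β := mul_le_mul_of_nonneg_left c2 sqs_nonneg
    -- bound the ℓ2 norm of the tail
    have hWl2 : l2norm hW ≤ M := by
      rw [hhW, l2norm_restr h W]
      have d1 : ∑ i ∈ W, (h i) ^ 2 ≤ θ * ∑ i ∈ W, |h i| := by
        rw [Finset.mul_sum]
        refine Finset.sum_le_sum fun i hi => ?_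
        have hb1 := hbdW i
        rw [show hW i = h i by simp [hhW, restr, hi]] at hb1
        calc (h i) ^ 2 = |h i| * |h i| := by rw [sq, ← abs_mul_abs_self]
          _ ≤ θ * |h i| := mul_le_mul_of_nonneg_right hb1 (abs_nonneg _)
      have d2 : θ * ∑ i ∈ W, |h i| ≤ M ^ 2 := by
        have hMsq : M ^ 2 = L * L / ks := by
          rw [hM, div_pow, sq, sq, sqks_sq]
        have hT1L : ∑ i ∈ T1, |h i| ≤ L := by linarith only [hsum, hWnonneg]
        have hWL : ∑ i ∈ W, |h i| ≤ L := by linarith only [hsum, hT1nonneg]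
        have hprod : (∑ i ∈ T1, |h i|) * ∑ i ∈ W, |h i| ≤ L * L :=
          mul_le_mul hT1L hWL hWnonneg hL0
        rw [hMsq, hθdef, div_mul_eq_mul_div]
        exact (div_le_div_iff_of_pos_right (by exact_mod_cast hks : (0:ℝ) < (ks:ℝ))).mpr hprod
      calc Real.sqrt (∑ i ∈ W, (h i) ^ 2) ≤ Real.sqrt (M ^ 2) :=
            Real.sqrt_le_sqrt (le_trans d1 d2)
        _ = M := Real.sqrt_sq hM0
    have hl2h : l2norm h ≤ β + M := by
      calc l2norm h = l2norm (hV + hW) := by rw [← hsplit]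
        _ ≤ l2norm hV + l2norm hW := l2norm_add_le _ _
        _ ≤ β + M := by rw [hβ]; linarith only [hWl2]
    -- combine: a * M ≤ β
    have hLM : L = M * sqks := by rw [hM, div_mul_cancel₀ _ sqks_pos.ne']
    have c1 : M * sqks ≤ sqs * β + α * β + α * M := by
      have t1 : α * l2norm h ≤ α * (β + M) := mul_le_mul_of_nonneg_left hl2h hα0.le
      have hc2 : L ≤ ∑ i ∈ S, |h i| + α * l2norm h := by rw [hL]; exact hcone
      linarith only [hc2, hS1, t1, hLM]
    have hsa' : sqks = α + a * (sqs + α) := by linarith only [hsa]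
    have e : M * sqks = M * α + a * M * (sqs + α) := by
      rw [hsa']; ring
    have c2 : a * M * (sqs + α) ≤ β * (sqs + α) := by
      rw [e] at c1; linarith only [c1]
    have h6 : a * M ≤ β := le_of_mul_le_mul_right c2 hden
    -- conclude β = 0
    have ha0 : 0 < a := by linarith
    have k1 : a * ((1 - δlb) * β) ≤ (1 + δub) * β := by
      calc a * ((1 - δlb) * β) ≤ a * ((1 + δub) * M) :=
            mul_le_mul_of_nonneg_left hlow ha0.le
        _ = (1 + δub) * (a * M) := by ring
        _ ≤ (1 + δub) * β := mul_le_mul_of_nonneg_left h6 (by linarith)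
    have hpos : 0 < a - 1 - δub - a * δlb := by linarith only [hcond]
    have k2 : β * (a - 1 - δub - a * δlb) ≤ 0 * (a - 1 - δub - a * δlb) := by
      linarith only [k1]
    have hβ0' : β ≤ 0 := le_of_mul_le_mul_right k2 hpos
    have hβz : β = 0 := le_antisymm hβ0' hβ0
    -- deduce h = 0
    have hVzero : ∀ i ∈ V, h i = 0 := by
      have := l2norm_eq_zero' (hβ.symm.trans hβz)
      intro i hi
      have := congrFun this i
      simpa [hhV, restr, hi] using this
    have hWzero : ∀ i ∈ W, h i = 0 := by
      intro j hj
      obtain ⟨i0, hi0⟩ := Finset.card_pos.mp (by rw [hT1card]; exact hks : 0 < T1.card)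
      have hi0V : i0 ∈ V := Finset.mem_union_right _ hi0
      have := hT1top i0 hi0 j hj
      rw [hVzero i0 hi0V] at this
      simp at this
      exact this
    have hzero : h = 0 := by
      funext i
      by_cases hiV : i ∈ V
      · exact hVzero i hiV
      · apply hWzero
        rw [hWdef, Finset.mem_sdiff, Finset.mem_compl]
        constructor
        · intro hiS; exact hiV (Finset.mem_union_left _ hiS)
        · intro hiT; exact hiV (Finset.mem_union_right _ hiT)
    rw [hh] at hzero
    exact sub_eq_zero.mp hzero
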